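/- Let G be a finite simple undirected graph on n vertices and let 2 ≤ k ≤ n. For every partition {S_1,…,S_k} of V(G) into k parts each of positive volume, Σ_{i=0}^{k-1} λ_i ≤ Σ_{1≤i<j≤k} e(S_i,S_j) · (1/vol(S_i) + 1/vol(S_j)). -/

import Mathlib

open Matrix Finset

/-- The degree-based volume of a vertex subset: the sum of the degrees of its vertices. -/
def gvol {n : ℕ} (G : SimpleGraph (Fin n)) [DecidableRel G.Adj] (S : Finset (Fin n)) : ℕ :=
  ∑ v ∈ S, G.degree v

/-- `eCount G S T` is the number of ordered pairs `(u, v)` with `u ∈ S`, `v ∈ T`, `u ~ v`. -/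
def eCount {n : ℕ} (G : SimpleGraph (Fin n)) [DecidableRel G.Adj] (S T : Finset (Fin n)) : ℕ :=
  ∑ u ∈ S, ∑ v ∈ T, if G.Adj u v then 1 else 0

/-- The normalized Laplacian `D^{-1/2} (D - A) D^{-1/2}`, with the convention that
`(D^{-1/2})_{uu} = 0` for isolated vertices `u`. -/
noncomputable def normLap {n : ℕ} (G : SimpleGraph (Fin n)) [DecidableRel G.Adj] :
    Matrix (Fin n) (Fin n) ℝ :=
  Matrix.diagonal (fun v => (Real.sqrt (G.degree v))⁻¹) * G.lapMatrix ℝ *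
    Matrix.diagonal (fun v => (Real.sqrt (G.degree v))⁻¹)

/-- A partition of the vertex set into `k` parts, each of positive volume. -/
def IsVolPartition {n k : ℕ} (G : SimpleGraph (Fin n)) [DecidableRel G.Adj]
    (P : Fin k → Finset (Fin n)) : Prop :=
  (∀ i j, i ≠ j → Disjoint (P i) (P j)) ∧ (∀ v, ∃ i, v ∈ P i) ∧ (∀ i, 0 < gvol G (P i))

section Aux

lemma part_sum {n k : ℕ} {P : Fin k → Finset (Fin n)}
    (hdisj : ∀ i j, i ≠ j → Disjoint (P i) (P j)) (hcov : ∀ v, ∃ i, v ∈ P i)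
    {M : Type*} [AddCommMonoid M] (f : Fin n → M) :
    ∑ i, ∑ v ∈ P i, f v = ∑ v, f v := by
  have h : ∀ i, ∑ v ∈ P i, f v = ∑ v : Fin n, if v ∈ P i then f v else 0 := by
    intro i; rw [Finset.sum_ite_mem, Finset.univ_inter]
  simp_rw [h]
  rw [Finset.sum_comm]
  refine Finset.sum_congr rfl fun v _ => ?_
  obtain ⟨i₀, hi₀⟩ := hcov v
  rw [Finset.sum_eq_single i₀]
  · simp [hi₀]
  · intro j _ hj
    have hv : v ∉ P j := fun hv => Finset.disjoint_left.mp (hdisj j i₀ hj) hv hi₀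
    simp [hv]
  · intro h'; exact absurd (Finset.mem_univ i₀) h'

lemma kyfan {n k : ℕ} (hk : 1 ≤ k) (hkn : k ≤ n) (lam mu : Fin n → ℝ)
    (hmono : Monotone lam) (σ : Equiv.Perm (Fin n)) (hσ : lam = mu ∘ σ)
    (t : Fin n → ℝ) (ht0 : ∀ j, 0 ≤ t j) (ht1 : ∀ j, t j ≤ 1)
    (hsum : ∑ j, t j = (k : ℝ)) :
    ∑ i : Fin k, lam (Fin.castLE hkn i) ≤ ∑ j, mu j * t j := by
  have hn : 0 < n := lt_of_lt_of_le hk hkn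
  set c := lam ⟨k - 1, by omega⟩ with hcdef
  have h1 : ∑ j, (min (mu j - c) 0 + c * t j) ≤ ∑ j, mu j * t j := by
    refine Finset.sum_le_sum fun j _ => ?_
    have h : min (mu j - c) 0 ≤ (mu j - c) * t j := by
      rcases le_or_gt c (mu j) with h | h
      · calc min (mu j - c) 0 ≤ 0 := min_le_right _ _
          _ ≤ (mu j - c) * t j := mul_nonneg (by linarith) (ht0 j)
      · calc min (mu j - c) 0 ≤ mu j - c := min_le_left _ _
          _ ≤ (mu j - c) * t j := by nlinarith [ht1 j, ht0 j]
    nlinarith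
  have h2 : ∑ j, (min (mu j - c) 0 + c * t j)
      = (∑ j, min (lam j - c) 0) + c * k := by
    rw [Finset.sum_add_distrib, ← Finset.mul_sum, hsum]
    congr 1
    rw [hσ]
    exact (Equiv.sum_comp σ (fun j => min (mu j - c) 0)).symm
  have hpt : ∀ j : Fin n, min (lam j - c) 0 = if (j : ℕ) < k then lam j - c else 0 := by
    intro j
    by_cases hj : (j : ℕ) < k
    · rw [if_pos hj, min_eq_left]
      have : lam j ≤ c := hmono (show j ≤ (⟨k - 1, by omega⟩ : Fin n) by
        simp only [Fin.le_def]; omega)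
      linarith
    · rw [if_neg hj, min_eq_right]
      have : c ≤ lam j := hmono (show (⟨k - 1, by omega⟩ : Fin n) ≤ j by
        simp only [Fin.le_def]; omega)
      linarith
  have h3 : ∑ j, min (lam j - c) 0 = ∑ i : Fin k, (lam (Fin.castLE hkn i) - c) := by
    simp_rw [hpt]
    rw [← Finset.sum_filter]
    refine (Finset.sum_nbij' (fun (i : Fin k) => Fin.castLE hkn i)
      (fun (j : Fin n) => (⟨min (j : ℕ) (k - 1), by omega⟩ : Fin k))
      ?_ ?_ ?_ ?_ ?_).symm
    · intro a _; simp only [Finset.mem_filter, Finset.mem_univ, true_and]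
      exact a.isLt
    · intro a _; exact Finset.mem_univ _
    · intro a _
      ext
      simp only [Fin.coe_castLE]
      omega
    · intro a ha
      simp only [Finset.mem_filter, Finset.mem_univ, true_and] at ha
      ext
      simp only [Fin.coe_castLE]
      omega
    · intro a _; rfl
  have h4 : ∑ i : Fin k, lam (Fin.castLE hkn i)
      = (∑ i : Fin k, (lam (Fin.castLE hkn i) - c)) + c * k := by
    rw [Finset.sum_sub_distrib, Finset.sum_const, Finset.card_univ, Fintype.card_fin]
    ring
  rw [h4, ← h3]
  rw [h2] at h1
  linarith

lemma rayleigh_decomp {m : ℕ} {A : Matrix (Fin m) (Fin m) ℝ} (hA : A.IsHermitian)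
    (x : Fin m → ℝ) :
    x ⬝ᵥ A *ᵥ x = ∑ j, hA.eigenvalues j *
      ((star (hA.eigenvectorUnitary : Matrix (Fin m) (Fin m) ℝ) *ᵥ x) j)^2 := by
  set U := (hA.eigenvectorUnitary : Matrix (Fin m) (Fin m) ℝ) with hU
  have hspec := hA.spectral_theorem
  have hofReal : (RCLike.ofReal ∘ hA.eigenvalues : Fin m → ℝ) = hA.eigenvalues := rfl
  rw [hofReal] at hspec
  conv_lhs => rw [hspec, Unitary.conjStarAlgAut_apply]
  rw [← mulVec_mulVec, ← mulVec_mulVec, dotProduct_mulVec]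
  have hstar : star U = Uᵀ := by
    rw [Matrix.star_eq_conjTranspose, Matrix.conjTranspose_eq_transpose_of_trivial]
  rw [hstar, Matrix.mulVec_transpose]
  simp only [dotProduct, Matrix.mulVec_diagonal, pow_two]
  exact Finset.sum_congr rfl fun j _ => by ring

lemma eCount_comm {n : ℕ} (G : SimpleGraph (Fin n)) [DecidableRel G.Adj]
    (S T : Finset (Fin n)) : eCount G S T = eCount G T S := by
  unfold eCount
  rw [Finset.sum_comm]
  refine Finset.sum_congr rfl fun u _ => Finset.sum_congr rfl fun v _ => ?_
  exact if_congr (G.adj_comm v u) rfl rfl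

lemma degree_eq_sum {n : ℕ} (G : SimpleGraph (Fin n)) [DecidableRel G.Adj] (v : Fin n) :
    G.degree v = ∑ w : Fin n, if G.Adj v w then 1 else 0 := by
  have := G.degree_eq_sum_if_adj (R := ℕ) v
  simpa using this

lemma quad_eq {n : ℕ} (G : SimpleGraph (Fin n)) [DecidableRel G.Adj]
    (S : Finset (Fin n)) (hvol : 0 < gvol G S) :
    (fun v => if v ∈ S then Real.sqrt (G.degree v) / Real.sqrt (gvol G S) else 0) ⬝ᵥ
      normLap G *ᵥ (fun v => if v ∈ S then Real.sqrt (G.degree v) / Real.sqrt (gvol G S) else 0)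
    = 1 - (eCount G S S : ℝ) / (gvol G S) := by
  set V : ℝ := (gvol G S : ℝ) with hVdef
  have hV : 0 < V := by rw [hVdef]; exact_mod_cast hvol
  have hsV : Real.sqrt V ≠ 0 := ne_of_gt (Real.sqrt_pos.mpr hV)
  have hVinv : (Real.sqrt V)⁻¹ * (Real.sqrt V)⁻¹ = V⁻¹ := by
    rw [← mul_inv, Real.mul_self_sqrt hV.le]
  set x : Fin n → ℝ := fun v => if v ∈ S then Real.sqrt (G.degree v) / Real.sqrt V else 0 with hx
  set y : Fin n → ℝ := fun v => if v ∈ S ∧ G.degree v ≠ 0 then (Real.sqrt V)⁻¹ else 0 with hy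
  have hDx : (Matrix.diagonal (fun v => (Real.sqrt (G.degree v))⁻¹)) *ᵥ x = y := by
    funext v
    rw [Matrix.mulVec_diagonal]
    by_cases hvS : v ∈ S
    · by_cases hd : G.degree v = 0
      · simp [hx, hy, hvS, hd]
      · have hsd : Real.sqrt (G.degree v) ≠ 0 := by
          refine ne_of_gt (Real.sqrt_pos.mpr ?_)
          exact_mod_cast Nat.pos_of_ne_zero hd
        simp only [hx, hy, if_pos hvS, if_pos (And.intro hvS hd)]
        rw [div_eq_mul_inv, ← mul_assoc, inv_mul_cancel₀ hsd, one_mul]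
    · simp [hx, hy, hvS]
  have key : x ⬝ᵥ normLap G *ᵥ x = y ⬝ᵥ (G.lapMatrix ℝ) *ᵥ y := by
    unfold normLap
    rw [← Matrix.mulVec_mulVec, ← Matrix.mulVec_mulVec, hDx]
    rw [Matrix.dotProduct_mulVec x]
    have h2 : x ᵥ* (Matrix.diagonal fun v => (Real.sqrt (G.degree v))⁻¹) = y := by
      funext v
      rw [Matrix.vecMul_diagonal, mul_comm]
      have := congrFun hDx v
      rwa [Matrix.mulVec_diagonal] at this
    rw [h2]
  rw [key]
  have hexp : y ⬝ᵥ (G.lapMatrix ℝ) *ᵥ y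
      = (∑ v, (G.degree v : ℝ) * (y v * y v)) - ∑ v, ∑ u, (if G.Adj v u then y v * y u else 0) := by
    unfold dotProduct
    simp_rw [SimpleGraph.lapMatrix_mulVec_apply, mul_sub, Finset.sum_sub_distrib]
    congr 1
    · exact Finset.sum_congr rfl fun v _ => by ring
    · refine Finset.sum_congr rfl fun v _ => ?_
      rw [Finset.mul_sum, SimpleGraph.neighborFinset_eq_filter, Finset.sum_filter]
  rw [hexp]
  have hA : (∑ v, (G.degree v : ℝ) * (y v * y v)) = 1 := by
    have h1 : ∀ v, (G.degree v : ℝ) * (y v * y v) = if v ∈ S then (G.degree v : ℝ) * V⁻¹ else 0 := by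
      intro v
      by_cases hvS : v ∈ S
      · by_cases hd : G.degree v = 0
        · simp [hy, hvS, hd]
        · simp only [hy, if_pos (And.intro hvS hd), if_pos hvS, hVinv]
      · simp [hy, hvS]
    simp_rw [h1]
    rw [Finset.sum_ite_mem, Finset.univ_inter, ← Finset.sum_mul]
    have h2 : (∑ v ∈ S, (G.degree v : ℝ)) = V := by rw [hVdef]; push_cast [gvol]; rfl
    rw [h2, mul_inv_cancel₀ (ne_of_gt hV)]
  have hB : (∑ v, ∑ u, (if G.Adj v u then y v * y u else 0)) = (eCount G S S : ℝ) / V := by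
    have hpt : ∀ v u, (if G.Adj v u then y v * y u else 0)
        = if v ∈ S then (if u ∈ S then (if G.Adj v u then V⁻¹ else 0) else 0) else 0 := by
      intro v u
      by_cases ha : G.Adj v u
      · have hdv : G.degree v ≠ 0 := by
          have : 0 < G.degree v := G.degree_pos_iff_exists_adj v |>.mpr ⟨u, ha⟩
          omega
        have hdu : G.degree u ≠ 0 := by
          have : 0 < G.degree u := G.degree_pos_iff_exists_adj u |>.mpr ⟨v, ha.symm⟩
          omega
        by_cases hvS : v ∈ S <;> by_cases huS : u ∈ S <;>
          simp [hy, hvS, huS, hdv, hdu, ha, hVinv]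
      · simp [ha]
    simp_rw [hpt]
    have h2 : ∀ v : Fin n, (∑ u, if v ∈ S then (if u ∈ S then (if G.Adj v u then V⁻¹ else 0) else 0) else 0)
        = if v ∈ S then ∑ u ∈ S, (if G.Adj v u then V⁻¹ else 0) else 0 := by
      intro v
      by_cases hvS : v ∈ S
      · simp only [if_pos hvS]; rw [Finset.sum_ite_mem, Finset.univ_inter]
      · simp [hvS]
    simp_rw [h2]
    rw [Finset.sum_ite_mem, Finset.univ_inter]
    unfold eCount
    push_cast
    rw [Finset.sum_div]
    refine Finset.sum_congr rfl fun v _ => ?_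
    rw [Finset.sum_div]
    refine Finset.sum_congr rfl fun u _ => ?_
    by_cases ha : G.Adj v u <;> simp [ha, one_div]
  rw [hA, hB, hVdef]

end Aux

/-- For every partition of the vertices of `G` into `k` parts of positive volume,
`∑_{i=0}^{k-1} λ_i ≤ ∑_{i<j} e(S_i,S_j) (1/vol(S_i) + 1/vol(S_j))`. -/
theorem sum_eigenvalues_le_partition_sum {n k : ℕ} (hk : 2 ≤ k) (hkn : k ≤ n)
    (G : SimpleGraph (Fin n)) [DecidableRel G.Adj]
    (hL : (normLap G).IsHermitian)
    (lam : Fin n → ℝ) (hmono : Monotone lam)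
    (hperm : ∃ σ : Equiv.Perm (Fin n), lam = hL.eigenvalues ∘ σ)
    (hlam0 : lam ⟨0, by omega⟩ = 0)
    (P : Fin k → Finset (Fin n)) (hP : IsVolPartition G P) :
    ∑ i : Fin k, lam (Fin.castLE hkn i) ≤
      ∑ i : Fin k, ∑ j : Fin k, if i < j then
        (eCount G (P i) (P j) : ℝ) * (1 / (gvol G (P i) : ℝ) + 1 / (gvol G (P j) : ℝ))
      else 0 := by
  classical
  obtain ⟨hdisj, hcov, hvol⟩ := hP
  obtain ⟨σ, hσ⟩ := hperm
  set U := (hL.eigenvectorUnitary : Matrix (Fin n) (Fin n) ℝ) with hUdef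
  have hstar : star U = Uᵀ := by
    rw [Matrix.star_eq_conjTranspose, Matrix.conjTranspose_eq_transpose_of_trivial]
  have hUtU : Uᵀ * U = 1 := by
    have h := Unitary.coe_star_mul_self hL.eigenvectorUnitary
    simpa [hUdef, Unitary.coe_star, Matrix.star_eq_conjTranspose,
      Matrix.conjTranspose_eq_transpose_of_trivial] using h
  have hUUt : U * Uᵀ = 1 := by
    have h := Unitary.coe_mul_star_self hL.eigenvectorUnitary
    simpa [hUdef, Unitary.coe_star, Matrix.star_eq_conjTranspose,
      Matrix.conjTranspose_eq_transpose_of_trivial] using h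
  have hVpos : ∀ i, (0:ℝ) < (gvol G (P i) : ℝ) := fun i => by exact_mod_cast hvol i
  set x : Fin k → Fin n → ℝ :=
    fun i v => if v ∈ P i then Real.sqrt (G.degree v) / Real.sqrt (gvol G (P i)) else 0
    with hxdef
  set c : Fin k → Fin n → ℝ := fun i => star U *ᵥ x i with hcdef
  set t : Fin n → ℝ := fun j => ∑ i, (c i j)^2 with htdef
  -- norm of each x i
  have hxnorm : ∀ i, ∑ v ∈ P i, (x i v)^2 = 1 := by
    intro i
    have h1 : ∀ v ∈ P i, (x i v)^2 = (G.degree v : ℝ) / (gvol G (P i) : ℝ) := by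
      intro v hv
      simp only [hxdef, if_pos hv, div_pow, Real.sq_sqrt (Nat.cast_nonneg _)]
    rw [Finset.sum_congr rfl h1, ← Finset.sum_div]
    have h2 : (∑ v ∈ P i, (G.degree v : ℝ)) = (gvol G (P i) : ℝ) := by
      push_cast [gvol]; rfl
    rw [h2, div_self (ne_of_gt (hVpos i))]
  have hxfull : ∀ i, ∑ v, (x i v)^2 = 1 := by
    intro i
    rw [← hxnorm i]
    symm
    apply Finset.sum_subset (Finset.subset_univ _)
    intro v _ hv
    simp [hxdef, hv]
  have hcform : ∀ i j, c i j = ∑ v ∈ P i, U v j * x i v := by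
    intro i j
    have h1 : c i j = ∑ v, U v j * x i v := by
      simp only [hcdef, Matrix.mulVec, dotProduct, Matrix.star_apply, star_trivial]
    rw [h1]
    symm
    apply Finset.sum_subset (Finset.subset_univ _)
    intro v _ hv
    simp [hxdef, hv]
  have ht0 : ∀ j, 0 ≤ t j := fun j => Finset.sum_nonneg fun i _ => sq_nonneg _
  have ht1 : ∀ j, t j ≤ 1 := by
    intro j
    have hle : ∀ i, (c i j)^2 ≤ ∑ v ∈ P i, (U v j)^2 := by
      intro i
      have h := Finset.sum_mul_sq_le_sq_mul_sq (P i) (fun v => U v j) (x i)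
      rw [hxnorm i, mul_one] at h
      rw [hcform i j]
      exact h
    calc t j ≤ ∑ i, ∑ v ∈ P i, (U v j)^2 := Finset.sum_le_sum fun i _ => hle i
      _ = ∑ v, (U v j)^2 := part_sum hdisj hcov _
      _ = 1 := by
        have h1 : (Uᵀ * U) j j = (1 : Matrix (Fin n) (Fin n) ℝ) j j := by rw [hUtU]
        rw [Matrix.mul_apply] at h1
        simpa [Matrix.transpose_apply, pow_two, Matrix.one_apply] using h1
  have htsum : ∑ j, t j = (k : ℝ) := by
    simp only [htdef]
    rw [Finset.sum_comm]
    have h1 : ∀ i : Fin k, ∑ j, (c i j)^2 = 1 := by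
      intro i
      have hd : ∑ j, (c i j)^2 = c i ⬝ᵥ c i := by
        simp [dotProduct, pow_two]
      rw [hd]
      have hc1 : c i = x i ᵥ* U := by
        simp only [hcdef]; rw [hstar, Matrix.mulVec_transpose]
      have hc2 : c i = Uᵀ *ᵥ x i := by
        simp only [hcdef]; rw [hstar]
      calc c i ⬝ᵥ c i = (x i ᵥ* U) ⬝ᵥ (Uᵀ *ᵥ x i) := by rw [← hc1, ← hc2]
        _ = ((x i ᵥ* U) ᵥ* Uᵀ) ⬝ᵥ x i := Matrix.dotProduct_mulVec _ _ _
        _ = (x i ᵥ* (U * Uᵀ)) ⬝ᵥ x i := by rw [Matrix.vecMul_vecMul]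
        _ = x i ⬝ᵥ x i := by rw [hUUt, Matrix.vecMul_one]
        _ = 1 := by
          have := hxfull i
          simpa [dotProduct, pow_two] using this
    rw [Finset.sum_congr rfl fun i _ => h1 i, Finset.sum_const, Finset.card_univ,
      Fintype.card_fin, nsmul_eq_mul, mul_one]
  have hkf := kyfan (by omega) hkn lam hL.eigenvalues hmono σ hσ t ht0 ht1 htsum
  have hswap : ∑ j, hL.eigenvalues j * t j = ∑ i : Fin k, (x i ⬝ᵥ normLap G *ᵥ x i) := by
    simp only [htdef]
    simp_rw [Finset.mul_sum]
    rw [Finset.sum_comm]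
    refine Finset.sum_congr rfl fun i _ => ?_
    rw [rayleigh_decomp hL (x i)]
  have hquad : ∀ i, x i ⬝ᵥ normLap G *ᵥ x i
      = 1 - (eCount G (P i) (P i) : ℝ) / (gvol G (P i)) := by
    intro i
    have := quad_eq G (P i) (hvol i)
    simpa [hxdef] using this
  have hvolsum : ∀ i, (gvol G (P i)) = ∑ j, eCount G (P i) (P j) := by
    intro i
    unfold gvol eCount
    conv_rhs => rw [Finset.sum_comm]
    refine Finset.sum_congr rfl fun u _ => ?_
    rw [part_sum hdisj hcov (fun v => if G.Adj u v then 1 else 0)]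
    exact degree_eq_sum G u
  -- the right-hand side identity
  have hrhs : (∑ i : Fin k, (1 - (eCount G (P i) (P i) : ℝ) / (gvol G (P i))))
      = ∑ i : Fin k, ∑ j : Fin k, (if i < j then
          (eCount G (P i) (P j) : ℝ) * (1 / (gvol G (P i) : ℝ) + 1 / (gvol G (P j) : ℝ))
        else 0) := by
    set e : Fin k → Fin k → ℝ := fun i j => (eCount G (P i) (P j) : ℝ) with hedef
    set w : Fin k → ℝ := fun i => (gvol G (P i) : ℝ) with hwdef
    have hsym : ∀ i j, e i j = e j i := by
      intro i j; simp only [hedef]; rw [eCount_comm]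
    have hsumw : ∀ i, ∑ j, e i j = w i := by
      intro i
      simp only [hedef, hwdef]
      rw [hvolsum i]
      push_cast
      rfl
    have hL1 : ∀ i : Fin k, (1 : ℝ) - e i i / w i
        = ∑ j : Fin k, (if j = i then 0 else e i j / w i) := by
      intro i
      have hone : (1:ℝ) = ∑ j : Fin k, e i j / w i := by
        rw [← Finset.sum_div, hsumw i, div_self (ne_of_gt (hVpos i))]
      have hsplit : (∑ j : Fin k, (if j = i then 0 else e i j / w i)) + e i i / w i
          = ∑ j : Fin k, e i j / w i := by
        have hii : e i i / w i = ∑ j : Fin k, (if j = i then e i j / w i else 0) := by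
          rw [Finset.sum_ite_eq' Finset.univ i (fun j => e i j / w i)]
          simp
        rw [hii, ← Finset.sum_add_distrib]
        refine Finset.sum_congr rfl fun j _ => ?_
        by_cases hji : j = i <;> simp [hji]
      linarith [hsplit, hone.symm]
    have hexpand : ∀ i j : Fin k, (if i < j then e i j * (1 / w i + 1 / w j) else 0)
        = (if i < j then e i j / w i else 0) + (if i < j then e i j / w j else 0) := by
      intro i j
      by_cases hij : i < j
      · simp only [if_pos hij]; rw [mul_add]; rw [mul_one_div, mul_one_div]
      · simp [hij]
    calc ∑ i : Fin k, ((1:ℝ) - e i i / w i)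
        = ∑ i : Fin k, ∑ j : Fin k, (if j = i then 0 else e i j / w i) :=
          Finset.sum_congr rfl fun i _ => hL1 i
      _ = ∑ i : Fin k, ∑ j : Fin k, ((if i < j then e i j / w i else 0)
            + (if j < i then e i j / w i else 0)) := by
          refine Finset.sum_congr rfl fun i _ => Finset.sum_congr rfl fun j _ => ?_
          rcases lt_trichotomy i j with h | h | h
          · rw [if_neg (by omega : ¬ j = i), if_pos h, if_neg (by omega : ¬ j < i), add_zero]
          · rw [if_pos h.symm, if_neg (by omega : ¬ i < j), if_neg (by omega : ¬ j < i), add_zero]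
          · rw [if_neg (by omega : ¬ j = i), if_neg (by omega : ¬ i < j), if_pos h, zero_add]
      _ = (∑ i : Fin k, ∑ j : Fin k, (if i < j then e i j / w i else 0))
            + ∑ i : Fin k, ∑ j : Fin k, (if j < i then e i j / w i else 0) := by
          rw [← Finset.sum_add_distrib]
          exact Finset.sum_congr rfl fun i _ => Finset.sum_add_distrib
      _ = (∑ i : Fin k, ∑ j : Fin k, (if i < j then e i j / w i else 0))
            + ∑ i : Fin k, ∑ j : Fin k, (if i < j then e i j / w j else 0) := by
          congr 1
          rw [Finset.sum_comm]
          refine Finset.sum_congr rfl fun i _ => Finset.sum_congr rfl fun j _ => ?_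
          by_cases hij : i < j
          · rw [if_pos hij, if_pos hij, hsym i j]
          · rw [if_neg hij, if_neg hij]
      _ = ∑ i : Fin k, ∑ j : Fin k, (if i < j then e i j * (1 / w i + 1 / w j) else 0) := by
          rw [← Finset.sum_add_distrib]
          refine Finset.sum_congr rfl fun i _ => ?_
          rw [← Finset.sum_add_distrib]
          exact Finset.sum_congr rfl fun j _ => (hexpand i j).symm
  calc ∑ i : Fin k, lam (Fin.castLE hkn i)
      ≤ ∑ j, hL.eigenvalues j * t j := hkf
    _ = ∑ i : Fin k, (x i ⬝ᵥ normLap G *ᵥ x i) := hswap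
    _ = ∑ i : Fin k, ((1:ℝ) - (eCount G (P i) (P i) : ℝ) / (gvol G (P i))) :=
        Finset.sum_congr rfl fun i _ => hquad i
    _ = _ := hrhs
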